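/- If T is a strong starter of order p and t ∈ Z_p, then no two distinct pairs lying in the same column of the triplication table Σ_p (first column: the pairs (x_i,y_i); second column: (t+x_i,t+y_i) together with the top pair (t,t); third column: (t-y_i,t-x_i)) have equal pair sums mod p. -/
import Mathlib


/-- `a`, `b` list the first/second elements of the pairs of a pairing in `ZMod n`.
`IsStarter n a b` says: the pairs partition `ZMod n \ {0}` (all entries distinct,
and the entries cover exactly the nonzero elements), and the differences
`±(a i - b i)` are all distinct and cover `ZMod n \ {0}`. -/
def IsStarter (n : ℕ) {ι : Type} (a b : ι → ZMod n) : Prop :=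
  Function.Injective (fun z : ι × Bool => if z.2 then a z.1 else b z.1) ∧
  Set.range a ∪ Set.range b = {x : ZMod n | x ≠ 0} ∧
  Function.Injective (fun z : ι × Bool => if z.2 then a z.1 - b z.1 else b z.1 - a z.1) ∧
  {d : ZMod n | ∃ i, d = a i - b i ∨ d = b i - a i} = {x : ZMod n | x ≠ 0}

/-- A strong starter: a starter whose pair sums `a i + b i` are all distinct and nonzero. -/
def IsStrongStarter (n : ℕ) {ι : Type} (a b : ι → ZMod n) : Prop :=
  IsStarter n a b ∧
  Function.Injective (fun i => a i + b i) ∧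
  ∀ i, a i + b i ≠ 0

/-- If `T` is a strong starter of order `p`, then no two distinct pairs in the same
column of the triplication table (first column: `(x i, y i)`; second column:
`(t + x i, t + y i)` together with the top pair `(t,t)`; third column:
`(t - y i, t - x i)`) have equal pair sums mod `p`. -/
theorem trip_column_sums_distinct (p q : ℕ) (hp : p = 2 * q + 1) (hodd : Odd p)
    (x y : Fin q → ZMod p) (hT : IsStrongStarter p x y) (t : ZMod p) :
    (∀ i j : Fin q, i ≠ j → x i + y i ≠ x j + y j) ∧
    (∀ i j : Fin q, i ≠ j → (t + x i) + (t + y i) ≠ (t + x j) + (t + y j)) ∧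
    (∀ i : Fin q, (t + x i) + (t + y i) ≠ t + t) ∧
    (∀ i j : Fin q, i ≠ j → (t - y i) + (t - x i) ≠ (t - y j) + (t - x j)) := by
  obtain ⟨_, hinj, hnz⟩ := hT
  refine ⟨fun i j hij h => hij (hinj h), fun i j hij h => hij (hinj ?_), fun i h => hnz i ?_,
    fun i j hij h => hij (hinj ?_)⟩
  · simpa using by linear_combination h
  · linear_combination h
  · linear_combination -h
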